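/- Suppose S is a nondegenerate bilinear form on H, either symmetric or antisymmetric, and N is a nilpotent infinitesimal automorphism of (H,S), i.e. S(Nx,y) + S(x,Ny) = 0 for all x, y ∈ H; let W be the weight filtration of N and, for i ≥ 0, let S^N_i be the nondegenerate form on Gr_i H induced by (a,b) ↦ S(a, N^i b). Let N̄ denote the maps Gr_j H → Gr_{j-2} H induced by N and P_j := ker(N̄^{j+1} : Gr_j H → Gr_{-j-2} H) for j ≥ 0, P_j := 0 for j < 0. Then for every i ≥ 0 the Lefschetz decomposition Gr_i H = ⨁_{r ≥ 0} N̄^r(P_{i+2r}) is S^N_i-orthogonal: for r ≠ s, S^N_i(a,b) = 0 for all a ∈ N̄^r(P_{i+2r}) and b ∈ N̄^s(P_{i+2s}). -/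

import Mathlib

/-- `W` is an increasing, exhaustive, bounded-below-and-above filtration of `V`
by `K`-subspaces, indexed by `ℤ`. -/
structure IsZFiltration {K V : Type*} [Field K] [AddCommGroup V] [Module K V]
    (W : ℤ → Submodule K V) : Prop where
  mono : ∀ i : ℤ, W (i - 1) ≤ W i
  eq_bot : ∃ a : ℤ, ∀ i ≤ a, W i = ⊥
  eq_top : ∃ b : ℤ, ∀ i ≥ b, W i = ⊤

/-- `W` is a weight filtration for the nilpotent endomorphism `N`:
(i) `N (W i) ⊆ W (i - 2)` for all `i`, and (ii) for every `i ≥ 0` the map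
`Gr_i H → Gr_{-i} H` induced by `N ^ i` is an isomorphism; condition (ii) is
expressed elementwise: injectivity (`inj`) and surjectivity (`surj`) of the
induced map on the graded pieces `Gr_i = W i / W (i - 1)`. -/
structure IsWeightFiltration {K V : Type*} [Field K] [AddCommGroup V] [Module K V]
    (N : Module.End K V) (W : ℤ → Submodule K V) extends IsZFiltration W : Prop where
  map_mem : ∀ i : ℤ, ∀ x ∈ W i, N x ∈ W (i - 2)
  inj : ∀ i : ℕ, ∀ x ∈ W (i : ℤ), (N ^ i) x ∈ W (-(i : ℤ) - 1) → x ∈ W ((i : ℤ) - 1)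
  surj : ∀ i : ℕ, ∀ y ∈ W (-(i : ℤ)), ∃ x ∈ W (i : ℤ), (N ^ i) x - y ∈ W (-(i : ℤ) - 1)

section Aux
variable {K V : Type*} [Field K] [AddCommGroup V] [Module K V]

lemma sign_lemma (S : V →ₗ[K] V →ₗ[K] K) (N : Module.End K V)
    (hinf : ∀ x y : V, S (N x) y + S x (N y) = 0) :
    ∀ (k : ℕ) (x y : V), S ((N ^ k) x) y = (-1 : K) ^ k * S x ((N ^ k) y) := by
  intro k
  induction k with
  | zero => simp
  | succ k ih =>
    intro x y
    have h1 : (N ^ (k+1)) x = (N ^ k) (N x) := by rw [pow_succ]; rfl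
    have h2 : (N ^ (k+1)) y = N ((N ^ k) y) := by rw [pow_succ']; rfl
    have h3 := hinf x ((N ^ k) y)
    rw [h1, ih (N x) y, h2]
    have h4 : S (N x) ((N ^ k) y) = - S x (N ((N ^ k) y)) :=
      eq_neg_of_add_eq_zero_left h3
    rw [h4]; ring

lemma pow_mem_lemma (N : Module.End K V) (W : ℤ → Submodule K V)
    (hmap : ∀ i : ℤ, ∀ x ∈ W i, N x ∈ W (i - 2)) :
    ∀ (k : ℕ) (j : ℤ) (x : V), x ∈ W j → (N ^ k) x ∈ W (j - 2 * k) := by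
  intro k
  induction k with
  | zero => intro j x hx; simpa using hx
  | succ k ih =>
    intro j x hx
    have h2 : (N ^ (k+1)) x = N ((N ^ k) x) := by rw [pow_succ']; rfl
    rw [h2]
    have h3 := hmap _ _ (ih j x hx)
    have h4 : j - 2 * (k : ℤ) - 2 = j - 2 * ((k : ℕ) + 1 : ℕ) := by push_cast; ring
    rwa [h4] at h3

lemma W_mono_lemma (W : ℤ → Submodule K V) (hmono : ∀ i : ℤ, W (i - 1) ≤ W i) :
    ∀ j j' : ℤ, j ≤ j' → W j ≤ W j' := by
  intro j j' h
  refine Int.le_induction (motive := fun z _ => W j ≤ W z) le_rfl ?_ j' h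
  intro n _ ih
  exact ih.trans (by simpa using hmono (n + 1))

lemma ortho_lemma (S : V →ₗ[K] V →ₗ[K] K)
    (hsym : (∀ x y : V, S x y = S y x) ∨ (∀ x y : V, S x y = - S y x))
    (N : Module.End K V)
    (hinf : ∀ x y : V, S (N x) y + S x (N y) = 0)
    (W : ℤ → Submodule K V) (hW : IsWeightFiltration N W) :
    ∀ a b : ℤ, a + b < 0 → ∀ x ∈ W a, ∀ y ∈ W b, S x y = 0 := by
  obtain ⟨a0, ha0⟩ := hW.eq_bot
  have mono := W_mono_lemma W hW.mono
  have swap0 : ∀ x y : V, S x y = 0 → S y x = 0 := by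
    intro x y h
    rcases hsym with hs | hs
    · rw [hs]; exact h
    · rw [hs, h, neg_zero]
  have key : ∀ k : ℕ, ∀ m : ℕ, -(m : ℤ) ≤ a0 + k →
      ∀ x ∈ W ((m : ℤ) - 1), ∀ y ∈ W (-(m : ℤ)), S x y = 0 := by
    intro k
    induction k with
    | zero =>
      intro m hm x hx y hy
      have hb : W (-(m : ℤ)) = ⊥ := ha0 _ (by simpa using hm)
      rw [hb] at hy
      simp only [Submodule.mem_bot] at hy
      simp [hy]
    | succ k ih =>
      intro m hm x hx y hy
      obtain ⟨z, hz, hzy⟩ := hW.surj m y hy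
      have hc : ((m + 1 : ℕ) : ℤ) = (m : ℤ) + 1 := by push_cast; ring
      -- term 2 : S x ((N^m) z - y) = 0
      have hx' : x ∈ W (((m + 1 : ℕ) : ℤ) - 1) := by
        rw [hc]; exact mono _ _ (by omega) hx
      have hsub : ((N ^ m) z - y) ∈ W (-((m + 1 : ℕ) : ℤ)) := by
        rw [hc]; have : -((m : ℤ) + 1) = -(m : ℤ) - 1 := by ring
        rw [this]; exact hzy
    -- term 1 : S x ((N^m) z) = 0
      have t2 : S x ((N ^ m) z - y) = 0 := ih (m + 1) (by push_cast at hm ⊢; omega) x hx' _ hsub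
      have hNx : (N ^ m) x ∈ W (-((m + 1 : ℕ) : ℤ)) := by
        have := pow_mem_lemma N W hW.map_mem m ((m : ℤ) - 1) x hx
        have heq : (m : ℤ) - 1 - 2 * m = -((m + 1 : ℕ) : ℤ) := by push_cast; ring
        rwa [heq] at this
      have hz' : z ∈ W (((m + 1 : ℕ) : ℤ) - 1) := by rw [hc]; simpa using hz
      have t1' : S z ((N ^ m) x) = 0 := ih (m + 1) (by push_cast at hm ⊢; omega) z hz' _ hNx
      have t1'' : S ((N ^ m) x) z = 0 := swap0 _ _ t1'
      have t1 : S x ((N ^ m) z) = 0 := by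
        have hs := sign_lemma S N hinf m x z
        rw [t1''] at hs
        have hne : ((-1 : K) ^ m) ≠ 0 := by
          simp [pow_ne_zero]
        exact (mul_eq_zero.mp hs.symm).resolve_left hne
      have : S x y = S x ((N ^ m) z) - S x ((N ^ m) z - y) := by
        simp [map_sub]
      rw [this, t1, t2, sub_zero]
  have onesided : ∀ m : ℕ, ∀ x ∈ W ((m : ℤ) - 1), ∀ y ∈ W (-(m : ℤ)), S x y = 0 := by
    intro m
    refine key (-(m : ℤ) - a0).toNat m ?_
    have := Int.self_le_toNat (-(m : ℤ) - a0)
    omega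
  intro a b hab x hx y hy
  by_cases hb : b < 0
  · have hm : ((-b).toNat : ℤ) = -b := Int.toNat_of_nonneg (by omega)
    refine onesided (-b).toNat x ?_ y ?_
    · exact mono _ _ (by omega) hx
    · rw [hm]; simpa using hy
  · have hm : ((-a).toNat : ℤ) = -a := Int.toNat_of_nonneg (by omega)
    refine swap0 _ _ (onesided (-a).toNat y ?_ x ?_)
    · exact mono _ _ (by omega) hy
    · rw [hm]; simpa using hx

end Aux

/-- **Orthogonality of the Lefschetz decomposition.** Let `N` be a nilpotent
infinitesimal automorphism of `(H, S)`, `S` nondegenerate symmetric or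
antisymmetric, `W` the weight filtration of `N`, and for `i ≥ 0` let `S^N_i` be
the induced nondegenerate form on `Gr_i`, given on representatives by
`(a, b) ↦ S a (N ^ i b)`.  For `r ≠ s`, any element of `N̄^r(P_{i+2r})` is the
class of `N^r x` with `x ∈ W (i+2r)` primitive, i.e. `N^{(i+2r)+1} x ∈ W (-(i+2r)-3)`
(so that the class of `N^{(i+2r)+1} x` in `Gr_{-(i+2r)-2}` vanishes); similarly for
`N̄^s(P_{i+2s})`.  The statement: such classes are `S^N_i`-orthogonal. -/
theorem lefschetz_decomposition_orthogonal {K V : Type*} [Field K]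
    [AddCommGroup V] [Module K V] [FiniteDimensional K V]
    (S : V →ₗ[K] V →ₗ[K] K)
    (hnd : ∀ x : V, (∀ y : V, S x y = 0) → x = 0)
    (hsym : (∀ x y : V, S x y = S y x) ∨ (∀ x y : V, S x y = - S y x))
    (N : Module.End K V) (hN : IsNilpotent N)
    (hinf : ∀ x y : V, S (N x) y + S x (N y) = 0)
    (W : ℤ → Submodule K V) (hW : IsWeightFiltration N W) :
    ∀ (i r s : ℕ), r ≠ s →
      ∀ x ∈ W ((i : ℤ) + 2 * r), (N ^ (i + 2 * r + 1)) x ∈ W (-((i : ℤ) + 2 * r) - 3) →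
      ∀ y ∈ W ((i : ℤ) + 2 * s), (N ^ (i + 2 * s + 1)) y ∈ W (-((i : ℤ) + 2 * s) - 3) →
      S ((N ^ r) x) ((N ^ i) ((N ^ s) y)) = 0 := by
  intro i r s hrs x hx hxp y hy hyp
  have ortho := ortho_lemma S hsym N hinf W hW
  have comp : ∀ (a b : ℕ) (v : V), (N ^ (a + b)) v = (N ^ a) ((N ^ b) v) := by
    intro a b v; rw [pow_add]; rfl
  have hys : (N ^ i) ((N ^ s) y) = (N ^ (i + s)) y := (comp i s y).symm
  rw [hys]
  rcases lt_or_gt_of_ne hrs with hlt | hlt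
  · -- r < s : move all N's to the left
    have e1 := sign_lemma S N hinf (i + s) ((N ^ r) x) y
    -- e1 : S ((N^(i+s)) ((N^r) x)) y = (-1)^(i+s) * S ((N^r) x) ((N^(i+s)) y)
    have hbig : (N ^ (i + s)) ((N ^ r) x) = (N ^ (s - r - 1)) ((N ^ (i + 2 * r + 1)) x) := by
      have hexp : (i + s) + r = (s - r - 1) + (i + 2 * r + 1) := by omega
      rw [← comp, ← comp, hexp]
    have hmem : (N ^ (i + s)) ((N ^ r) x) ∈
        W (-((i : ℤ) + 2 * r) - 3 - 2 * ((s - r - 1 : ℕ) : ℤ)) := by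
      rw [hbig]
      exact pow_mem_lemma N W hW.map_mem _ _ _ hxp
    have hz : S ((N ^ (i + s)) ((N ^ r) x)) y = 0 := by
      refine ortho _ _ ?_ _ hmem _ hy
      have hcast : ((s - r - 1 : ℕ) : ℤ) = (s : ℤ) - r - 1 := by omega
      rw [hcast]; omega
    rw [hz] at e1
    have hne : ((-1 : K) ^ (i + s)) ≠ 0 := by simp [pow_ne_zero]
    exact (mul_eq_zero.mp e1.symm).resolve_left hne
  · -- s < r : move all N's to the right
    have e1 := sign_lemma S N hinf r x ((N ^ (i + s)) y)
    rw [e1]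
    have hbig : (N ^ r) ((N ^ (i + s)) y) = (N ^ (r - s - 1)) ((N ^ (i + 2 * s + 1)) y) := by
      have hexp : r + (i + s) = (r - s - 1) + (i + 2 * s + 1) := by omega
      rw [← comp, ← comp, hexp]
    have hmem : (N ^ r) ((N ^ (i + s)) y) ∈
        W (-((i : ℤ) + 2 * s) - 3 - 2 * ((r - s - 1 : ℕ) : ℤ)) := by
      rw [hbig]
      exact pow_mem_lemma N W hW.map_mem _ _ _ hyp
    have hz : S x ((N ^ r) ((N ^ (i + s)) y)) = 0 := by
      refine ortho _ _ ?_ _ hx _ hmem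
      have hcast : ((r - s - 1 : ℕ) : ℤ) = (r : ℤ) - s - 1 := by omega
      rw [hcast]; omega
    rw [hz, mul_zero]
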